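/- Let v ∈ ℝ^n and let d ∈ ℝ^n be a domino. Then var(v + d) ≤ var(v) + 2. -/

import Mathlib

/-- Number of sign changes in a list of real numbers. -/
noncomputable def signChangesList : List ℝ → ℕ
  | [] => 0
  | [_] => 0
  | a :: b :: t => (if a * b < 0 then 1 else 0) + signChangesList (b :: t)

/-- `signVar v` is the number of sign changes in `v` after deleting zero entries. -/
noncomputable def signVar {n : ℕ} (v : Fin n → ℝ) : ℕ :=
  signChangesList ((List.ofFn v).filter (fun x => decide (x ≠ 0)))

/-- `d` is an `i`-domino (0-based indices). -/
def IsDominoAt {n : ℕ} (i : Fin n) (d : Fin n → ℝ) : Prop :=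
  if h : (i : ℕ) + 1 < n then
    0 < d i * d ⟨(i : ℕ) + 1, h⟩ ∧
      ∀ j : Fin n, (j : ℕ) ≠ (i : ℕ) → (j : ℕ) ≠ (i : ℕ) + 1 → d j = 0
  else
    d i ≠ 0 ∧ ∀ j : Fin n, j ≠ i → d j = 0

/-- A nonzero domino. -/
def IsDomino {n : ℕ} (d : Fin n → ℝ) : Prop := ∃ i : Fin n, IsDominoAt i d

noncomputable def jn (a : ℝ) : List ℝ → ℕ
  | [] => 0
  | b :: _ => if a * b < 0 then 1 else 0

lemma sc_cons (a : ℝ) (L : List ℝ) :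
    signChangesList (a :: L) = jn a L + signChangesList L := by
  cases L <;> simp [signChangesList, jn]

lemma jn_le_one (a : ℝ) (L : List ℝ) : jn a L ≤ 1 := by
  cases L <;> simp [jn]; split <;> omega

lemma jn_cons (a b : ℝ) (L : List ℝ) :
    jn a (b :: L) = if a * b < 0 then 1 else 0 := rfl

lemma sc_le_cons (a : ℝ) (L : List ℝ) :
    signChangesList L ≤ signChangesList (a :: L) := by
  rw [sc_cons]; omega

lemma tri {a b c : ℝ} (ha : a ≠ 0) (hb : b ≠ 0) (hc : c ≠ 0) :
    (if a * c < 0 then (1:ℕ) else 0) ≤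
      (if a * b < 0 then 1 else 0) + (if b * c < 0 then 1 else 0) := by
  rcases ha.lt_or_gt with ha | ha <;> rcases hb.lt_or_gt with hb | hb <;>
    rcases hc.lt_or_gt with hc | hc <;> split_ifs <;> first | omega | nlinarith

lemma quad {a x y b : ℝ} (ha : a ≠ 0) (hx : x ≠ 0) (hy : y ≠ 0) (hb : b ≠ 0) :
    (if a * x < 0 then (1:ℕ) else 0) + (if x * y < 0 then 1 else 0) +
      (if y * b < 0 then 1 else 0) ≤ (if a * b < 0 then 1 else 0) + 2 := by
  rcases ha.lt_or_gt with ha | ha <;> rcases hx.lt_or_gt with hx | hx <;>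
    rcases hy.lt_or_gt with hy | hy <;> rcases hb.lt_or_gt with hb | hb <;>
    split_ifs <;> first | omega | nlinarith

/-- inserting one element before a zero-free list: `sc (x::T) ≤ sc (x::b::T)`. -/
lemma sc_cons_cons_ge {x b : ℝ} (hx : x ≠ 0) (hb : b ≠ 0) {T : List ℝ}
    (hT : ∀ y ∈ T, y ≠ 0) :
    signChangesList (x :: T) ≤ signChangesList (x :: b :: T) := by
  rw [sc_cons x T, sc_cons x (b :: T), sc_cons b T]
  have : jn x T ≤ jn x (b :: T) + jn b T := by
    cases T with
    | nil => simp [jn]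
    | cons c T' =>
      have hc : c ≠ 0 := hT c (List.mem_cons_self)
      simpa [jn] using tri hx hb hc
  omega

lemma sc_mono : ∀ (L2 L1 : List ℝ), L1.Sublist L2 → (∀ x ∈ L2, x ≠ 0) →
    signChangesList L1 ≤ signChangesList L2 ∧
      ∀ x : ℝ, x ≠ 0 → signChangesList (x :: L1) ≤ signChangesList (x :: L2) := by
  intro L2
  induction L2 with
  | nil =>
    intro L1 h _
    rw [List.sublist_nil.mp h]
    exact ⟨le_refl _, fun x _ => le_refl _⟩
  | cons b T ih =>
    intro L1 h hz
    have hb : b ≠ 0 := hz b (List.mem_cons_self)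
    have hzT : ∀ x ∈ T, x ≠ 0 := fun x hx => hz x (List.mem_cons_of_mem _ hx)
    cases h with
    | cons _ h' =>
      obtain ⟨h1, h2⟩ := ih L1 h' hzT
      refine ⟨h1.trans (sc_le_cons _ _), fun x hx => ?_⟩
      exact (h2 x hx).trans (sc_cons_cons_ge hx hb hzT)
    | cons_cons _ h' =>
      obtain ⟨h1, h2⟩ := ih _ h' hzT
      refine ⟨h2 b hb, fun x _ => ?_⟩
      rw [sc_cons x, sc_cons x (b :: T)]
      simp only [jn]
      have := h2 b hb
      omega

lemma sc_insert : ∀ (A M B : List ℝ), (∀ x ∈ A, x ≠ 0) → (∀ x ∈ M, x ≠ 0) →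
    (∀ x ∈ B, x ≠ 0) → M.length ≤ 2 →
    signChangesList (A ++ M ++ B) ≤ signChangesList (A ++ B) + 2 := by
  intro A
  induction A with
  | nil =>
    intro M B _ hM hB hlen
    rcases M with _ | ⟨x, _ | ⟨y, _ | ⟨z, M⟩⟩⟩
    · simp
    · simp only [List.nil_append, List.singleton_append, sc_cons]
      have := jn_le_one x B; omega
    · simp only [List.nil_append, List.cons_append, List.nil_append, sc_cons]
      have h1 := jn_le_one x (y :: B)
      have h2 := jn_le_one y B
      omega
    · simp at hlen
  | cons a A' ih =>
    intro M B hA hM hB hlen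
    have ha : a ≠ 0 := hA a (List.mem_cons_self)
    have hA' : ∀ x ∈ A', x ≠ 0 := fun x hx => hA x (List.mem_cons_of_mem _ hx)
    cases A' with
    | cons a' A'' =>
      have ha' : a' ≠ 0 := hA' a' (List.mem_cons_self)
      have key := ih M B hA' hM hB hlen
      simp only [List.cons_append] at key ⊢
      simp only [sc_cons, jn_cons] at key ⊢
      omega
    | nil =>
      rcases M with _ | ⟨x, _ | ⟨y, _ | ⟨z, M⟩⟩⟩
      · simp
      · have hx : x ≠ 0 := hM x (List.mem_cons_self)
        simp only [List.cons_append, List.nil_append, List.singleton_append, sc_cons]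
        have h1 := jn_le_one a (x :: B)
        have h2 := jn_le_one x B
        omega
      · have hx : x ≠ 0 := hM x (List.mem_cons_self)
        have hy : y ≠ 0 := hM y (List.mem_cons_of_mem _ (List.mem_cons_self))
        simp only [List.cons_append, List.nil_append, sc_cons]
        cases B with
        | nil =>
          simp only [jn]
          have h1 := jn_le_one a [x]  -- dummy
          split_ifs <;> omega
        | cons b B' =>
          have hb : b ≠ 0 := hB b (List.mem_cons_self)
          have := quad ha hx hy hb
          simp only [jn]
          omega
      · simp at hlen

/-- Key list-level lemma: replacing a block of length ≤ 2 changes the filtered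
sign variation by at most 2. -/
lemma sc_key (A M M' B : List ℝ) (hM : M.length ≤ 2) :
    signChangesList ((A ++ M ++ B).filter (fun x => decide (x ≠ 0))) ≤
      signChangesList ((A ++ M' ++ B).filter (fun x => decide (x ≠ 0))) + 2 := by
  set p : ℝ → Bool := fun x => decide (x ≠ 0) with hp
  have hnz : ∀ (L : List ℝ), ∀ x ∈ L.filter p, x ≠ 0 := by
    intro L x hx
    have := List.of_mem_filter hx
    simpa [hp] using this
  simp only [List.filter_append]
  have h1 : signChangesList (A.filter p ++ M.filter p ++ B.filter p) ≤
      signChangesList (A.filter p ++ B.filter p) + 2 :=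
    sc_insert _ _ _ (hnz A) (hnz M) (hnz B)
      ((List.length_filter_le _ _).trans hM)
  have hsub : (A.filter p ++ B.filter p).Sublist
      (A.filter p ++ (M'.filter p ++ B.filter p)) :=
    (List.sublist_append_right (M'.filter p) (B.filter p)).append_left _
  have hnz2 : ∀ x ∈ A.filter p ++ (M'.filter p ++ B.filter p), x ≠ 0 := by
    intro x hx
    rcases List.mem_append.mp hx with h | h
    · exact hnz A x h
    · rcases List.mem_append.mp h with h | h
      · exact hnz M' x h
      · exact hnz B x h
  have h2 := (sc_mono _ _ hsub hnz2).1
  calc signChangesList (A.filter p ++ M.filter p ++ B.filter p)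
      ≤ signChangesList (A.filter p ++ B.filter p) + 2 := h1
    _ ≤ signChangesList (A.filter p ++ (M'.filter p ++ B.filter p)) + 2 := by omega
    _ = signChangesList (A.filter p ++ M'.filter p ++ B.filter p) + 2 := by
        rw [List.append_assoc]

/-- If `v` and `w` agree off positions `k`, `k+1`, then `signVar w ≤ signVar v + 2`. -/
lemma signVar_le_of_agree {n : ℕ} (k : ℕ) (v w : Fin n → ℝ)
    (hagree : ∀ j : Fin n, (j : ℕ) ≠ k → (j : ℕ) ≠ k + 1 → v j = w j) :
    signVar w ≤ signVar v + 2 := by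
  set Lv := List.ofFn v with hLv
  set Lw := List.ofFn w with hLw
  have hlenv : Lv.length = n := by simp [hLv]
  have hlenw : Lw.length = n := by simp [hLw]
  have htake : Lw.take k = Lv.take k := by
    apply List.ext_getElem
    · simp [hlenv, hlenw]
    · intro m h1 h2
      rw [List.getElem_take, List.getElem_take]
      have hm : m < n := by
        have := h1; simp [hlenw] at this; omega
      simp only [hLv, hLw, List.getElem_ofFn]
      have hmk : m < k := by
        have := h1; simp [hlenw] at this; omega
      exact (hagree ⟨m, hm⟩ (by simp; omega) (by simp; omega)).symm
  have hdrop : Lw.drop (k + 2) = Lv.drop (k + 2) := by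
    apply List.ext_getElem
    · simp [hlenv, hlenw]
    · intro m h1 h2
      rw [List.getElem_drop, List.getElem_drop]
      have hm : k + 2 + m < n := by
        have := h1; simp [hlenw] at this; omega
      simp only [hLv, hLw, List.getElem_ofFn]
      exact (hagree ⟨k + 2 + m, hm⟩ (by simp; omega) (by simp; omega)).symm
  have hdecomp : ∀ (L : List ℝ), L = L.take k ++ (L.drop k).take 2 ++ L.drop (k + 2) := by
    intro L
    conv_lhs => rw [← List.take_append_drop k L]
    rw [List.append_assoc]
    congr 1
    conv_lhs => rw [← List.take_append_drop 2 (L.drop k)]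
    rw [List.drop_drop]
  have hMlen : ((Lw.drop k).take 2).length ≤ 2 := by
    simp [List.length_take]
  have key := sc_key (Lv.take k) ((Lw.drop k).take 2) ((Lv.drop k).take 2)
    (Lv.drop (k + 2)) hMlen
  unfold signVar
  rw [← hLv, ← hLw]
  calc signChangesList (Lw.filter fun x => decide (x ≠ 0))
      = signChangesList ((Lv.take k ++ (Lw.drop k).take 2 ++ Lv.drop (k + 2)).filter
          fun x => decide (x ≠ 0)) := by
        conv_lhs => rw [hdecomp Lw]
        rw [htake, hdrop]
    _ ≤ signChangesList ((Lv.take k ++ (Lv.drop k).take 2 ++ Lv.drop (k + 2)).filter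
          fun x => decide (x ≠ 0)) + 2 := key
    _ = signChangesList (Lv.filter fun x => decide (x ≠ 0)) + 2 := by
        rw [← hdecomp Lv]

/-- Lemma 10.6(i): adding a domino (possibly zero) to a vector increases its sign
variation by at most 2. -/
theorem signVar_add_domino_le (n : ℕ) (v d : Fin n → ℝ)
    (hd : d = 0 ∨ IsDomino d) :
    signVar (v + d) ≤ signVar v + 2 := by
  rcases hd with rfl | ⟨i, hi⟩
  · simp only [add_zero]; exact Nat.le_add_right (signVar v) 2
  · by_cases hin : (i : ℕ) + 1 < n
    · rw [IsDominoAt, dif_pos hin] at hi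
      apply signVar_le_of_agree (i : ℕ)
      intro j hj1 hj2
      have : d j = 0 := hi.2 j hj1 hj2
      simp [this]
    · rw [IsDominoAt, dif_neg hin] at hi
      apply signVar_le_of_agree (i : ℕ)
      intro j hj1 _
      have : d j = 0 := hi.2 j (fun h => hj1 (by rw [h]))
      simp [this]
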